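/- Let Ẑ ∈ M_opt and P₂ := Z*/n. Then (I_n−P₂)·Z*·(I_n−P₂) = 0; the matrix (I_n−P₂)·Ẑ·(I_n−P₂) is positive semidefinite with trace equal to ‖Z* − Ẑ‖₁/n; and for every real symmetric n×n matrix Λ, |⟨Λ, (I_n−P₂)(Ẑ−Z*)(I_n−P₂)⟩| = |⟨Λ, (I_n−P₂)·Ẑ·(I_n−P₂)⟩| ≤ ‖Λ‖₂·‖Z* − Ẑ‖₁/n. -/

import Mathlib

open Matrix Finset

noncomputable section

def opNorm {k l : ℕ} (A : Matrix (Fin k) (Fin l) ℝ) : ℝ :=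
  ‖(Matrix.toEuclideanLin A).toContinuousLinearMap‖

def ip {n : ℕ} (A B : Matrix (Fin n) (Fin n) ℝ) : ℝ := Matrix.trace (Aᵀ * B)

def ell1Norm {k l : ℕ} (M : Matrix (Fin k) (Fin l) ℝ) : ℝ := ∑ i, ∑ j, |M i j|

def frobNorm {k l : ℕ} (M : Matrix (Fin k) (Fin l) ℝ) : ℝ :=
  Real.sqrt (∑ i, ∑ j, (M i j) ^ 2)

def euclNorm {k : ℕ} (x : Fin k → ℝ) : ℝ := Real.sqrt (∑ i, x i ^ 2)

def En (n : ℕ) : Matrix (Fin n) (Fin n) ℝ := Matrix.of fun _ _ => 1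

def centering (n : ℕ) : Matrix (Fin n) (Fin n) ℝ := 1 - ((n : ℝ)⁻¹) • En n

def Mopt (n : ℕ) : Set (Matrix (Fin n) (Fin n) ℝ) :=
  {Z | Z.PosSemidef ∧ ∀ i, Z i i = 1}

def MGplus (n : ℕ) : Set (Matrix (Fin n) (Fin n) ℝ) :=
  {Z | Z.PosSemidef ∧ ∀ i, Z i i ≤ 1}

def MoptPlus (n : ℕ) : Set (Matrix (Fin n) (Fin n) ℝ) :=
  {Z | Z.PosSemidef ∧ (∀ i, Z i i = 1) ∧ ip (En n) Z = 0}

def u2 (n n₁ : ℕ) : Fin n → ℝ := fun j => if (j : ℕ) < n₁ then 1 else -1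

def Zstar (n n₁ : ℕ) : Matrix (Fin n) (Fin n) ℝ :=
  Matrix.vecMulVec (u2 n n₁) (u2 n n₁)

def wmin (n n₁ n₂ : ℕ) : ℝ := min ((n₁ : ℝ) / n) ((n₂ : ℝ) / n)

def vref (n n₁ n₂ : ℕ) : Fin n → ℝ :=
  fun j => if (j : ℕ) < n₁ then (n₂ : ℝ) / n else -((n₁ : ℝ) / n)

def Rmat (n n₁ n₂ p : ℕ) (γ : ℝ) : Matrix (Fin n) (Fin n) ℝ :=
  ((p : ℝ) * γ) • Matrix.vecMulVec (vref n n₁ n₂) (vref n n₁ n₂)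


lemma quad_bound {n : ℕ} (Λ : Matrix (Fin n) (Fin n) ℝ) (x : Fin n → ℝ) :
    |x ⬝ᵥ (Λ *ᵥ x)| ≤ opNorm Λ * (∑ i, x i ^ 2) := by
  set L := (Matrix.toEuclideanLin Λ).toContinuousLinearMap with hL
  set y : EuclideanSpace ℝ (Fin n) := (WithLp.equiv 2 _).symm x with hy
  have h1 : x ⬝ᵥ (Λ *ᵥ x) = inner ℝ y (L y) := by
    simp [hy, hL, PiLp.inner_apply, dotProduct, Matrix.toEuclideanLin_apply,
      RCLike.inner_apply, mulVec, mul_comm]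
  have h2 : (∑ i, x i ^ 2) = ‖y‖ ^ 2 := by
    rw [EuclideanSpace.norm_eq, Real.sq_sqrt (by positivity)]
    simp [hy, Real.norm_eq_abs, sq_abs]
  rw [h1, h2]
  calc |inner ℝ y (L y)| ≤ ‖y‖ * ‖L y‖ := abs_real_inner_le_norm y (L y)
    _ ≤ ‖y‖ * (‖L‖ * ‖y‖) := by
        exact mul_le_mul_of_nonneg_left (L.le_opNorm y) (norm_nonneg y)
    _ = opNorm Λ * ‖y‖ ^ 2 := by rw [opNorm]; ring

lemma ip_psd_bound {n : ℕ} (Λ M : Matrix (Fin n) (Fin n) ℝ) (hΛ : Λᵀ = Λ)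
    (hM : M.PosSemidef) : |ip Λ M| ≤ opNorm Λ * M.trace := by
  obtain ⟨S, hSS, hSpsd⟩ : ∃ S : Matrix (Fin n) (Fin n) ℝ, S * S = M ∧ S.PosSemidef := by
    open scoped MatrixOrder in
    exact ⟨CFC.sqrt M, CFC.sqrt_mul_sqrt_self M hM.nonneg, (CFC.sqrt_nonneg M).posSemidef⟩
  have hSsym : Sᵀ = S := by
    have := hSpsd.1
    rwa [Matrix.IsHermitian, conjTranspose_eq_transpose_of_trivial] at this
  have hsym : ∀ a b, S a b = S b a := fun a b =>
    (Matrix.transpose_apply S b a).symm.trans (by rw [hSsym])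
  have hΛsym : ∀ a b, Λ a b = Λ b a := fun a b =>
    (Matrix.transpose_apply Λ b a).symm.trans (by rw [hΛ])
  have key : ip Λ M = ∑ i, (fun j => S i j) ⬝ᵥ (Λ *ᵥ (fun j => S i j)) := by
    rw [ip, hΛ, ← hSS, ← mul_assoc, trace_mul_comm]
    rw [Matrix.trace]
    refine Finset.sum_congr rfl fun i _ => ?_
    simp only [diag_apply, mul_apply, dotProduct, mulVec, dotProduct, Finset.mul_sum,
      Finset.sum_mul]
    rw [Finset.sum_comm]
    refine Finset.sum_congr rfl fun j _ => Finset.sum_congr rfl fun k _ => ?_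
    rw [hsym j i, hΛsym k j]; ring
  have htr : M.trace = ∑ i, ∑ j, S i j ^ 2 := by
    rw [← hSS, Matrix.trace]
    refine Finset.sum_congr rfl fun i _ => ?_
    simp only [diag_apply, mul_apply]
    refine Finset.sum_congr rfl fun j _ => ?_
    rw [hsym j i, sq]
  calc |ip Λ M| ≤ ∑ i, |(fun j => S i j) ⬝ᵥ (Λ *ᵥ (fun j => S i j))| := by
        rw [key]; exact Finset.abs_sum_le_sum_abs _ _
    _ ≤ ∑ i, opNorm Λ * (∑ j, S i j ^ 2) :=
        Finset.sum_le_sum fun i _ => quad_bound Λ _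
    _ = opNorm Λ * M.trace := by rw [htr, Finset.mul_sum]

/-- projection identities and the nuclear-norm style bound
`|⟨Λ, (I-P₂)(Ẑ-Z*)(I-P₂)⟩| ≤ ‖Λ‖₂·‖Z* - Ẑ‖₁/n` for `Ẑ ∈ M_opt`, `P₂ = Z*/n`. -/
theorem projection_perp_bound (n n₁ n₂ : ℕ) (hn : n = n₁ + n₂)
    (hn₁ : 0 < n₁) (hn₂ : 0 < n₂)
    (Zhat : Matrix (Fin n) (Fin n) ℝ) (hZhat : Zhat ∈ Mopt n) :
    let P2 : Matrix (Fin n) (Fin n) ℝ := (n : ℝ)⁻¹ • Zstar n n₁;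
    ((1 - P2) * Zstar n n₁ * (1 - P2) = 0) ∧
    ((1 - P2) * Zhat * (1 - P2)).PosSemidef ∧
    Matrix.trace ((1 - P2) * Zhat * (1 - P2)) = ell1Norm (Zstar n n₁ - Zhat) / n ∧
    (∀ Λ : Matrix (Fin n) (Fin n) ℝ, Λᵀ = Λ →
      |ip Λ ((1 - P2) * (Zhat - Zstar n n₁) * (1 - P2))| =
        |ip Λ ((1 - P2) * Zhat * (1 - P2))| ∧
      |ip Λ ((1 - P2) * Zhat * (1 - P2))| ≤
        opNorm Λ * ell1Norm (Zstar n n₁ - Zhat) / n) := by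
  intro P2
  have hn0 : (n : ℝ) ≠ 0 := Nat.cast_ne_zero.mpr (by omega)
  set u := u2 n n₁ with hu
  have hpm : ∀ k, u k = 1 ∨ u k = -1 := by
    intro k; by_cases h : (k : ℕ) < n₁ <;> simp [hu, u2, h]
  have hu2 : ∀ k, u k * u k = 1 := by
    intro k; rcases hpm k with h | h <;> rw [h] <;> norm_num
  have hupm : ∀ i j, u i * u j = 1 ∨ u i * u j = -1 := by
    intro i j; rcases hpm i with h | h <;> rcases hpm j with h' | h' <;>
      rw [h, h'] <;> norm_num
  have hZsapp : ∀ i j, Zstar n n₁ i j = u i * u j := fun i j => rfl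
  have hZZ : Zstar n n₁ * Zstar n n₁ = (n : ℝ) • Zstar n n₁ := by
    ext i j
    simp only [mul_apply, hZsapp, Matrix.smul_apply, smul_eq_mul]
    calc ∑ k, u i * u k * (u k * u j) = ∑ _k : Fin n, u i * u j := by
          refine Finset.sum_congr rfl fun k _ => ?_
          calc u i * u k * (u k * u j) = (u k * u k) * (u i * u j) := by ring
            _ = u i * u j := by rw [hu2 k, one_mul]
      _ = (n : ℝ) * (u i * u j) := by
          rw [Finset.sum_const, card_univ, Fintype.card_fin, nsmul_eq_mul]
  have hPZ : P2 * Zstar n n₁ = Zstar n n₁ := by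
    show ((n : ℝ)⁻¹ • Zstar n n₁) * Zstar n n₁ = Zstar n n₁
    rw [Matrix.smul_mul, hZZ, smul_smul, inv_mul_cancel₀ hn0, one_smul]
  have h1Z : (1 - P2) * Zstar n n₁ = 0 := by
    rw [sub_mul, one_mul, hPZ, sub_self]
  have part1 : (1 - P2) * Zstar n n₁ * (1 - P2) = 0 := by rw [h1Z, zero_mul]
  have hZsT : (Zstar n n₁)ᵀ = Zstar n n₁ := by
    ext i j; rw [transpose_apply, hZsapp, hZsapp, mul_comm]
  have hQsym : (1 - P2)ᴴ = 1 - P2 := by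
    rw [conjTranspose_eq_transpose_of_trivial, transpose_sub, transpose_one]
    show 1 - ((n : ℝ)⁻¹ • Zstar n n₁)ᵀ = _
    rw [transpose_smul, hZsT]
  have part2 : ((1 - P2) * Zhat * (1 - P2)).PosSemidef := by
    have := hZhat.1.conjTranspose_mul_mul_same (1 - P2)
    rwa [hQsym] at this
  have hZsym : ∀ a b, Zhat a b = Zhat b a := by
    intro a b
    have h := congrFun (congrFun hZhat.1.1 b) a
    simpa using h
  have habs : ∀ i j, |Zhat i j| ≤ 1 := by
    intro i j
    rcases eq_or_ne i j with h | h
    · rw [h, hZhat.2 j]; norm_num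
    · have key : ∀ c : ℝ, 0 ≤ 1 + c * Zhat i j + c * Zhat j i + c * c := by
        intro c
        have h0 := hZhat.1.dotProduct_mulVec_nonneg (fun k => (if k = i then (1 : ℝ) else 0) +
          c * (if k = j then 1 else 0))
        simp only [star_trivial, dotProduct, mulVec, mul_add, add_mul, mul_ite,
          ite_mul, one_mul, mul_one, zero_mul, mul_zero, Finset.sum_add_distrib,
          Finset.mul_sum, Finset.sum_mul, Finset.sum_ite_eq', Finset.sum_ite_eq,
          Finset.mem_univ, if_true, h, h.symm, if_false] at h0
        rw [hZhat.2 i, hZhat.2 j] at h0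
        nlinarith [h0]
      have k1 := key 1
      have k2 := key (-1)
      rw [hZsym j i] at k1 k2
      rw [abs_le]; constructor <;> nlinarith
  have hptw : ∀ i j, |(Zstar n n₁ - Zhat) i j| = 1 - u i * u j * Zhat i j := by
    intro i j
    have hb := abs_le.mp (habs i j)
    rw [Matrix.sub_apply, hZsapp]
    rcases hupm i j with h | h <;> rw [h]
    · rw [abs_of_nonneg (by linarith [hb.2])]; ring
    · rw [abs_of_nonpos (by linarith [hb.1])]; ring
  have hPP : P2 * P2 = P2 := by
    show ((n : ℝ)⁻¹ • Zstar n n₁) * ((n : ℝ)⁻¹ • Zstar n n₁) = (n : ℝ)⁻¹ • Zstar n n₁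
    rw [Matrix.smul_mul, Matrix.mul_smul, hZZ, smul_smul, smul_smul]
    congr 1
    field_simp
  have hQQ : (1 - P2) * (1 - P2) = 1 - P2 := by
    rw [sub_mul, one_mul, mul_sub, mul_one, hPP, sub_self, sub_zero]
  have hT : Matrix.trace (Zstar n n₁ * Zhat) = ∑ i, ∑ j, u i * u j * Zhat i j := by
    rw [Matrix.trace]
    simp only [diag_apply, mul_apply, hZsapp]
    rw [Finset.sum_comm]
    exact Finset.sum_congr rfl fun i _ => Finset.sum_congr rfl fun j _ => by
      rw [hZsym i j]; ring
  have htrZhat : Matrix.trace Zhat = (n : ℝ) := by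
    rw [Matrix.trace]
    simp only [diag_apply, hZhat.2]
    simp
  have hell1 : ell1Norm (Zstar n n₁ - Zhat) =
      (n : ℝ) * n - Matrix.trace (Zstar n n₁ * Zhat) := by
    rw [ell1Norm, hT]
    have : ∀ i : Fin n, ∑ j, |(Zstar n n₁ - Zhat) i j| =
        ∑ j, (1 - u i * u j * Zhat i j) :=
      fun i => Finset.sum_congr rfl fun j _ => hptw i j
    simp only [this, Finset.sum_sub_distrib, Finset.sum_const, card_univ,
      Fintype.card_fin, nsmul_eq_mul, mul_one]
  have part3 : Matrix.trace ((1 - P2) * Zhat * (1 - P2)) =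
      ell1Norm (Zstar n n₁ - Zhat) / n := by
    rw [trace_mul_comm, ← mul_assoc, hQQ, sub_mul, one_mul, trace_sub]
    have hP2Z : P2 * Zhat = (n : ℝ)⁻¹ • (Zstar n n₁ * Zhat) := Matrix.smul_mul _ _ _
    rw [hP2Z, trace_smul, smul_eq_mul, htrZhat, hell1]
    field_simp
  refine ⟨part1, part2, part3, fun Λ hΛ => ?_⟩
  have heq : (1 - P2) * (Zhat - Zstar n n₁) * (1 - P2) =
      (1 - P2) * Zhat * (1 - P2) := by
    have h' : (1 - P2) * (Zhat - Zstar n n₁) = (1 - P2) * Zhat := by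
      rw [mul_sub, h1Z, sub_zero]
    rw [h']
  refine ⟨by rw [heq], ?_⟩
  calc |ip Λ ((1 - P2) * Zhat * (1 - P2))| ≤
      opNorm Λ * Matrix.trace ((1 - P2) * Zhat * (1 - P2)) :=
        ip_psd_bound Λ _ hΛ part2
    _ = opNorm Λ * ell1Norm (Zstar n n₁ - Zhat) / n := by rw [part3]; ring

end
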